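/- For the 2+4 product model on ℝ⁶ with sectional curvatures μ (on the 2-dimensional factor) and λ (on the 4-dimensional factor), the pointwise invariants take the values Q = −(12/25)(μ³ − 7λμ² + 33λ²μ − 9λ³), L₁ = 12(μ+λ)²(μ−3λ), L₂ = (6/25)(μ+λ)²(7μ−33λ), and L₃ = (39/25)(μ+λ)³. -/
import Mathlib


open Finset

/-- Kulkarni–Nomizu product of two 2-tensors: (S∧T)_{ijkl}. -/
def KN {n : ℕ} (S T : Fin n → Fin n → ℝ) : Fin n → Fin n → Fin n → Fin n → ℝ :=
  fun i j k l => S i k * T j l + S j l * T i k - S i l * T j k - S j k * T i l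

/-- Composition of 2-tensors (as endomorphisms, indices raised by the standard metric). -/
noncomputable def comp2 {n : ℕ} (S T : Fin n → Fin n → ℝ) : Fin n → Fin n → ℝ :=
  fun i j => ∑ u, S i u * T u j

/-- Composition of curvature-type 4-tensors: (A∘B)_{ijkl} = (1/2) A_{ij}^{uv} B_{uvkl}. -/
noncomputable def comp4 {n : ℕ} (A B : Fin n → Fin n → Fin n → Fin n → ℝ) :
    Fin n → Fin n → Fin n → Fin n → ℝ :=
  fun i j k l => (1 / 2 : ℝ) * ∑ u, ∑ v, A i j u v * B u v k l

/-- Partial (Ricci-type) trace of a 4-tensor: (tr A)_{ij} = A_{iuj}^{u}. -/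
noncomputable def ptr {n : ℕ} (A : Fin n → Fin n → Fin n → Fin n → ℝ) :
    Fin n → Fin n → ℝ :=
  fun i j => ∑ u, A i u j u

/-- Full trace of a 2-tensor. -/
noncomputable def tr2 {n : ℕ} (S : Fin n → Fin n → ℝ) : ℝ := ∑ i, S i i

/-- Inner product of 2-tensors (standard metric). -/
noncomputable def inner2 {n : ℕ} (S T : Fin n → Fin n → ℝ) : ℝ := ∑ i, ∑ j, S i j * T i j

/-- The first-factor metric on ℝ^m ⊕ ℝ^{6-m} ≅ ℝ⁶, extended by zero. -/
def g6 (m : ℕ) : Fin 6 → Fin 6 → ℝ := fun i j => if i = j ∧ (i : ℕ) < m then 1 else 0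

/-- The second-factor metric on ℝ^m ⊕ ℝ^{6-m} ≅ ℝ⁶, extended by zero. -/
def h6 (m : ℕ) : Fin 6 → Fin 6 → ℝ := fun i j => if i = j ∧ m ≤ (i : ℕ) then 1 else 0

/-- The standard inner product ḡ on ℝ⁶. -/
def gb6 : Fin 6 → Fin 6 → ℝ := fun i j => if i = j then 1 else 0

/-- Curvature model of a product of spaceforms of dimensions m and 6−m with
sectional curvatures μ and ν: R = (μ/2) g∧g + (ν/2) h∧h. -/
noncomputable def Rm (m : ℕ) (μ ν : ℝ) : Fin 6 → Fin 6 → Fin 6 → Fin 6 → ℝ :=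
  fun i j k l => (μ / 2) * KN (g6 m) (g6 m) i j k l + (ν / 2) * KN (h6 m) (h6 m) i j k l

/-- J = tr_ḡ(Ric)/10 in dimension six. -/
noncomputable def Jm (m : ℕ) (μ ν : ℝ) : ℝ := tr2 (ptr (Rm m μ ν)) / 10

/-- Schouten tensor P = (Ric − Jḡ)/4 in dimension six. -/
noncomputable def Pm (m : ℕ) (μ ν : ℝ) : Fin 6 → Fin 6 → ℝ :=
  fun i j => (ptr (Rm m μ ν) i j - Jm m μ ν * gb6 i j) / 4

/-- Trace-free Schouten tensor E = P − (J/6)ḡ. -/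
noncomputable def Em (m : ℕ) (μ ν : ℝ) : Fin 6 → Fin 6 → ℝ :=
  fun i j => Pm m μ ν i j - (Jm m μ ν / 6) * gb6 i j

/-- Weyl tensor W = R − P∧ḡ. -/
noncomputable def Wm (m : ℕ) (μ ν : ℝ) : Fin 6 → Fin 6 → Fin 6 → Fin 6 → ℝ :=
  fun i j k l => Rm m μ ν i j k l - KN (Pm m μ ν) gb6 i j k l

/-- W² = W∘W. -/
noncomputable def W2m (m : ℕ) (μ ν : ℝ) := comp4 (Wm m μ ν) (Wm m μ ν)

/-- W³ = W∘W∘W. -/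
noncomputable def W3m (m : ℕ) (μ ν : ℝ) := comp4 (Wm m μ ν) (W2m m μ ν)

/-- Q = −(40/9)J³ + 16J|E|² − 16 tr E³ − 8 W_{ijkl}E^{ik}E^{jl}. -/
noncomputable def Qm (m : ℕ) (μ ν : ℝ) : ℝ :=
  -(40 / 9) * (Jm m μ ν) ^ 3 + 16 * Jm m μ ν * inner2 (Em m μ ν) (Em m μ ν)
    - 16 * tr2 (comp2 (Em m μ ν) (comp2 (Em m μ ν) (Em m μ ν)))
    - 8 * ∑ i, ∑ j, ∑ k, ∑ l, Wm m μ ν i j k l * Em m μ ν i k * Em m μ ν j l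

/-- L₁ = 96⟨E, tr W²⟩. -/
noncomputable def L1m (m : ℕ) (μ ν : ℝ) : ℝ := 96 * inner2 (Em m μ ν) (ptr (W2m m μ ν))

/-- L₂ = 16⟨E, tr W²⟩ − (4/3) J tr² W². -/
noncomputable def L2m (m : ℕ) (μ ν : ℝ) : ℝ :=
  16 * inner2 (Em m μ ν) (ptr (W2m m μ ν)) - (4 / 3) * Jm m μ ν * tr2 (ptr (W2m m μ ν))

/-- L₃ = 4 tr² W³. -/
noncomputable def L3m (m : ℕ) (μ ν : ℝ) : ℝ := 4 * tr2 (ptr (W3m m μ ν))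


lemma fv0 : ((0:Fin 6):ℕ) = 0 := rfl
lemma fv1 : ((1:Fin 6):ℕ) = 1 := rfl
lemma fv2 : ((2:Fin 6):ℕ) = 2 := rfl
lemma fv3 : ((3:Fin 6):ℕ) = 3 := rfl
lemma fv4 : ((4:Fin 6):ℕ) = 4 := rfl
lemma fv5 : ((5:Fin 6):ℕ) = 5 := rfl

def chi6 (i : Fin 6) : ℝ := if (i : ℕ) < 2 then 1 else 0

def D4 (i j k l : Fin 6) : ℝ := gb6 i k * gb6 j l - gb6 i l * gb6 j k

noncomputable def pfun (μ lam : ℝ) (i : Fin 6) : ℝ :=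
  (2*μ-3*lam)/10 * chi6 i + (9*lam-μ)/20 * (1 - chi6 i)

noncomputable def Fw (μ lam : ℝ) (i j : Fin 6) : ℝ :=
  μ * chi6 i * chi6 j + lam * (1 - chi6 i) * (1 - chi6 j) - pfun μ lam i - pfun μ lam j

lemma g6_eq (i j : Fin 6) : g6 2 i j = chi6 i * gb6 i j := by
  simp only [g6, gb6, chi6]
  split_ifs with h1 h2 h3 h2 <;> simp_all <;> omega

lemma h6_eq (i j : Fin 6) : h6 2 i j = (1 - chi6 i) * gb6 i j := by
  simp only [h6, gb6, chi6]
  split_ifs with h1 h2 h3 h2 <;> simp_all <;> omega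

lemma Jm_eq (μ lam : ℝ) : Jm 2 μ lam = (μ + 6*lam)/5 := by
  simp only [Jm, tr2, ptr, Rm, KN, g6, h6, Fin.sum_univ_six]
  norm_num [fv0, fv1, fv2, fv3, fv4, fv5, Fin.ext_iff]
  ring

lemma Pm_eq (μ lam : ℝ) (i j : Fin 6) : Pm 2 μ lam i j = pfun μ lam i * gb6 i j := by
  fin_cases i <;> fin_cases j <;>
    simp only [Pm, Jm_eq, ptr, Rm, KN, g6, h6, gb6, pfun, chi6, Fin.sum_univ_six] <;>
    norm_num [fv0, fv1, fv2, fv3, fv4, fv5, Fin.ext_iff] <;> ring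

lemma Em_eq (μ lam : ℝ) (i j : Fin 6) :
    Em 2 μ lam i j = ((μ-3*lam)/6 * chi6 i + (3*lam-μ)/12 * (1 - chi6 i)) * gb6 i j := by
  simp only [Em, Pm_eq, Jm_eq, pfun, chi6, gb6]
  split_ifs <;> ring

lemma gb6_symm (i j : Fin 6) : gb6 i j = gb6 j i := by
  simp only [gb6, eq_comm]

lemma pfun_gb (μ lam : ℝ) (i k : Fin 6) :
    pfun μ lam k * gb6 i k = pfun μ lam i * gb6 i k := by
  simp only [gb6]; split_ifs with h <;> simp [h]

lemma W_eq (μ lam : ℝ) :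
    Wm 2 μ lam = fun i j k l => Fw μ lam i j * D4 i j k l := by
  funext i j k l
  simp only [Wm, Rm, KN, g6_eq, h6_eq, Pm_eq, Fw, D4]
  ring

lemma comp4_delta (G H : Fin 6 → Fin 6 → ℝ) (hH : ∀ i j, H i j = H j i) :
    comp4 (fun i j k l => G i j * D4 i j k l) (fun i j k l => H i j * D4 i j k l)
      = fun i j k l => G i j * H i j * D4 i j k l := by
  funext i j k l
  simp only [comp4, D4, gb6, mul_ite, ite_mul, mul_one, one_mul, mul_zero, zero_mul,
    sub_mul, mul_sub, Finset.sum_sub_distrib, Finset.sum_ite_eq, Finset.sum_ite_eq',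
    Finset.mem_univ, if_true]
  split_ifs <;> subst_vars <;> simp_all <;> ring

lemma Fw_symm (μ lam : ℝ) (i j : Fin 6) : Fw μ lam i j = Fw μ lam j i := by
  simp only [Fw]; ring

set_option maxHeartbeats 4000000 in
theorem stmt10 (μ lam : ℝ) :
    Qm 2 μ lam = -(12 / 25) * (μ ^ 3 - 7 * lam * μ ^ 2 + 33 * lam ^ 2 * μ - 9 * lam ^ 3) ∧
    L1m 2 μ lam = 12 * (μ + lam) ^ 2 * (μ - 3 * lam) ∧
    L2m 2 μ lam = (6 / 25) * (μ + lam) ^ 2 * (7 * μ - 33 * lam) ∧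
    L3m 2 μ lam = (39 / 25) * (μ + lam) ^ 3 := by
  have hW2 : W2m 2 μ lam = fun i j k l => Fw μ lam i j * Fw μ lam i j * D4 i j k l := by
    rw [W2m, W_eq]; exact comp4_delta _ _ (Fw_symm μ lam)
  have hW3 : W3m 2 μ lam
      = fun i j k l => Fw μ lam i j * (Fw μ lam i j * Fw μ lam i j) * D4 i j k l := by
    rw [W3m, W_eq, hW2]
    have := comp4_delta (Fw μ lam) (fun i j => Fw μ lam i j * Fw μ lam i j)
      (fun i j => by show Fw μ lam i j * Fw μ lam i j = Fw μ lam j i * Fw μ lam j i; rw [Fw_symm])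
    simpa using this
  refine ⟨?_, ?_, ?_, ?_⟩
  · simp only [Qm, Jm_eq, inner2, tr2, comp2, W_eq, Em_eq, Fin.sum_univ_six, Fw, pfun,
      chi6, D4, gb6, fv0, fv1, fv2, fv3, fv4, fv5, Fin.ext_iff]
    norm_num
    try ring
  · simp only [L1m, hW2, inner2, ptr, Em_eq, Fin.sum_univ_six, Fw, pfun,
      chi6, D4, gb6, fv0, fv1, fv2, fv3, fv4, fv5, Fin.ext_iff]
    norm_num
    try ring
  · simp only [L2m, hW2, Jm_eq, inner2, tr2, ptr, Em_eq, Fin.sum_univ_six, Fw, pfun,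
      chi6, D4, gb6, fv0, fv1, fv2, fv3, fv4, fv5, Fin.ext_iff]
    norm_num
    try ring
  · simp only [L3m, hW3, tr2, ptr, Fin.sum_univ_six, Fw, pfun,
      chi6, D4, gb6, fv0, fv1, fv2, fv3, fv4, fv5, Fin.ext_iff]
    norm_num
    try ring
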